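/- In the reverse-order picking procedure, if at round j agent i picks her minimum-cost item from a set P of exactly j remaining items, then the cost of the picked item is at most c'_i(e_j), the j-th largest item cost of agent i; consequently the bundle agent i builds satisfies c_i(X_i) ≤ c'_i(X'_i). -/

import Mathlib

open Finset

/-- The reverse-order picking procedure. `a' j` is the agent owning item `e_j` in
the IDO allocation `X'`; `σ i` sorts agent `i`'s costs non-increasingly, so
`c i (σ i j)` is agent `i`'s `(j+1)`-th largest item cost. In round `j`
(rounds processed in decreasing order of `j`), agent `a' j` picks item `p j`,
a minimum-cost item among those not picked in later rounds (a set of exactly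
`j+1` items). Then the picked item's cost is at most the corresponding sorted
cost, `c (a' j) (p j) ≤ c (a' j) (σ (a' j) j)`, and consequently
`c_i(X_i) ≤ c'_i(X'_i)` for every agent `i`. -/
theorem reverse_picking (n m : ℕ) (c : Fin n → Fin m → ℝ) (a' : Fin m → Fin n)
    (σ : Fin n → Equiv.Perm (Fin m))
    (hσ : ∀ (i : Fin n) (j k : Fin m), j ≤ k → c i (σ i k) ≤ c i (σ i j))
    (p : Fin m → Fin m) (hp : Function.Injective p)
    (hmin : ∀ j e : Fin m, (∀ k : Fin m, j < k → p k ≠ e) →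
      c (a' j) (p j) ≤ c (a' j) e) :
    (∀ j : Fin m, c (a' j) (p j) ≤ c (a' j) (σ (a' j) j)) ∧
    ∀ i : Fin n,
      ∑ j ∈ Finset.univ.filter (fun j => a' j = i), c i (p j) ≤
        ∑ j ∈ Finset.univ.filter (fun j => a' j = i), c i (σ i j) := by
  have main : ∀ j : Fin m, c (a' j) (p j) ≤ c (a' j) (σ (a' j) j) := by
    intro j
    set i := a' j
    have hjm := j.isLt
    have hcard : ((Finset.Ioi j).image p).card < ((Finset.Ici j).image (σ i)).card := by
      rw [Finset.card_image_of_injective _ hp,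
          Finset.card_image_of_injective _ (σ i).injective,
          Fin.card_Ioi, Fin.card_Ici]
      omega
    have hsub : ¬ ((Finset.Ici j).image (σ i) ⊆ (Finset.Ioi j).image p) :=
      fun h => absurd (Finset.card_le_card h) (not_le.mpr hcard)
    obtain ⟨e, he, hne⟩ := Finset.not_subset.mp hsub
    obtain ⟨l, hl, rfl⟩ := Finset.mem_image.mp he
    have hjl : j ≤ l := Finset.mem_Ici.mp hl
    have h1 : c i (p j) ≤ c i (σ i l) := by
      apply hmin
      intro k hk hpk
      exact hne (Finset.mem_image.mpr ⟨k, Finset.mem_Ioi.mpr hk, hpk⟩)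
    exact h1.trans (hσ i j l hjl)
  refine ⟨main, fun i => Finset.sum_le_sum ?_⟩
  intro j hj
  rw [Finset.mem_filter] at hj
  rw [← hj.2]
  exact main j
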